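/- The character of a faithful irreducible complex representation of a finite nilpotent group of nilpotency class at most 2 vanishes identically outside the center of the group. -/

import Mathlib

/-- A matrix representation is irreducible if the only invariant subspaces are trivial. -/
def IsIrreducibleRep {G : Type*} [Group G] {n : ℕ}
    (ρ : G →* Matrix.GeneralLinearGroup (Fin n) ℂ) : Prop :=
  ∀ W : Submodule ℂ (Fin n → ℂ),
    (∀ (g : G), ∀ v ∈ W, (ρ g : Matrix (Fin n) (Fin n) ℂ).mulVec v ∈ W) →
    W = ⊥ ∨ W = ⊤

open scoped commutatorElement

theorem stmt11 {Γ : Type*} [Group Γ] [Fintype Γ] {n : ℕ} (hn : 0 < n)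
    (h2 : ∀ x y z : Γ, ⁅x, ⁅y, z⁆⁆ = 1)
    (θ : Γ →* Matrix.GeneralLinearGroup (Fin n) ℂ)
    (hfaith : Function.Injective θ) (hirr : IsIrreducibleRep θ) :
    ∀ g : Γ, g ∉ Subgroup.center Γ →
      Matrix.trace (θ g : Matrix (Fin n) (Fin n) ℂ) = 0 := by
  intro g hg
  -- find h not commuting with g
  rw [Subgroup.mem_center_iff] at hg
  push_neg at hg
  obtain ⟨h, hh⟩ := hg
  set c : Γ := h * g * h⁻¹ * g⁻¹ with hc
  have hc1 : c ≠ 1 := by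
    intro h1
    apply hh
    have := congrArg (· * g * h) h1
    simpa [hc, mul_assoc] using this
  -- c is central
  have hcen : ∀ x : Γ, x * c = c * x := by
    intro x
    have := h2 x h g
    have : x * c * x⁻¹ * c⁻¹ = 1 := this
    calc x * c = (x * c * x⁻¹ * c⁻¹) * (c * x) := by group
    _ = c * x := by rw [this, one_mul]
  -- θ c commutes with every θ x (as matrices)
  set A : Matrix (Fin n) (Fin n) ℂ := (θ c : Matrix (Fin n) (Fin n) ℂ) with hA
  have hcomm : ∀ x : Γ, A * (θ x : Matrix (Fin n) (Fin n) ℂ)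
      = (θ x : Matrix (Fin n) (Fin n) ℂ) * A := by
    intro x
    have : θ c * θ x = θ x * θ c := by rw [← map_mul, ← map_mul, ← hcen]
    have := congrArg (Units.val) this
    simpa [hA] using this
  -- eigenvalue of A
  haveI : Nontrivial (Fin n → ℂ) := by
    haveI : Nonempty (Fin n) := ⟨⟨0, hn⟩⟩
    infer_instance
  obtain ⟨μ, hμ⟩ := Module.End.exists_eigenvalue (A.mulVecLin)
  set W := Module.End.eigenspace (A.mulVecLin) μ with hW
  have hWne : W ≠ ⊥ := hμ
  have hWinv : ∀ (x : Γ), ∀ v ∈ W, (θ x : Matrix (Fin n) (Fin n) ℂ).mulVec v ∈ W := by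
    intro x v hv
    rw [hW, Module.End.mem_eigenspace_iff] at hv ⊢
    simp only [Matrix.coe_mulVecLin] at hv ⊢
    rw [Matrix.mulVec_mulVec, hcomm, ← Matrix.mulVec_mulVec, hv, Matrix.mulVec_smul]
  have hWtop : W = ⊤ := (hirr W hWinv).resolve_left hWne
  -- hence A = μ • 1
  have hAsc : A = μ • (1 : Matrix (Fin n) (Fin n) ℂ) := by
    have hall : ∀ v : Fin n → ℂ, A.mulVec v = μ • v := by
      intro v
      have : v ∈ W := hWtop ▸ Submodule.mem_top
      rw [hW, Module.End.mem_eigenspace_iff] at this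
      simpa using this
    ext i j
    have := congrFun (hall (Pi.single j 1)) i
    simpa [Matrix.mulVec_single, Matrix.one_apply, Pi.single_apply,
      mul_comm] using this
  -- μ ≠ 1 by faithfulness
  have hμ1 : μ ≠ 1 := by
    intro h1
    apply hc1
    apply hfaith
    apply Units.ext
    rw [map_one]
    show A = _
    rw [hAsc, h1, one_smul]
    rfl
  -- trace computation
  set B : Matrix (Fin n) (Fin n) ℂ := (θ g : Matrix (Fin n) (Fin n) ℂ) with hB
  have key : Matrix.trace B = μ * Matrix.trace B := by
    have e1 : h * g * h⁻¹ = c * g := by simp [hc, mul_assoc]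
    have e2 : ((θ (h * g * h⁻¹) : Matrix (Fin n) (Fin n) ℂ))
        = (θ h : Matrix (Fin n) (Fin n) ℂ) * B * ((θ h)⁻¹ : Matrix.GeneralLinearGroup (Fin n) ℂ) := by
      simp [map_mul, hB, Matrix.mul_assoc]
    have e3 : ((θ (c * g) : Matrix (Fin n) (Fin n) ℂ)) = A * B := by
      simp [map_mul, hA, hB]
    have t1 : Matrix.trace ((θ (h * g * h⁻¹) : Matrix (Fin n) (Fin n) ℂ)) = Matrix.trace B := by
      rw [e2, Matrix.trace_mul_comm, ← Matrix.mul_assoc]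
      rw [Units.inv_mul, Matrix.one_mul]
    have t2 : Matrix.trace ((θ (c * g) : Matrix (Fin n) (Fin n) ℂ)) = μ * Matrix.trace B := by
      rw [e3, hAsc, Matrix.smul_mul, Matrix.one_mul, Matrix.trace_smul, smul_eq_mul]
    rw [e1] at t1
    rw [t2] at t1
    exact t1.symm
  have : (1 - μ) * Matrix.trace B = 0 := by ring_nf; linear_combination key
  rcases mul_eq_zero.mp this with h0 | h0
  · exact absurd (by linear_combination -h0) hμ1
  · exact h0
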